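/- The set G_k^n of formal words t_i^{p_i} t_{i+1}^{p_{i+1}} … t_{i−1}^{p_{i−1}} (indices cyclic mod k, exponents in Z_{n/2}), equipped with the right-multiplication ∘ by the generators described, forms a group of order k·(n/2)^k with identity t_0^0 t_1^0 … t_{k−1}^0, in which every generator has an inverse among the generators. -/

import Mathlib

/-- A node of the digraph DPillar_{n,k}: a column index in `ZMod k` together with a
row-index, a length-`k` string over an alphabet of size `n/2`. -/
abbrev DNode (n k : ℕ) := ZMod k × (ZMod k → ZMod (n / 2))

/-- The edge relation of the digraph DPillar_{n,k}: c-edges, a-edges, b-edges, d-edges. -/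
def DPillarEdge (n k : ℕ) (u w : DNode n k) : Prop :=
  (w.1 = u.1 + 1 ∧ ∀ i, i ≠ u.1 → w.2 i = u.2 i) ∨
  (w.1 = u.1 - 1 ∧ ∀ i, i ≠ u.1 - 1 → w.2 i = u.2 i) ∨
  (w.1 = u.1 ∧ w.2 ≠ u.2 ∧ ∀ i, i ≠ u.1 → w.2 i = u.2 i) ∨
  (w.1 = u.1 ∧ w.2 ≠ u.2 ∧ ∀ i, i ≠ u.1 - 1 → w.2 i = u.2 i)

/-- Right action of an a-generator with parameter `q`. -/
def aMap (n k : ℕ) (q : ZMod (n / 2)) : DNode n k → DNode n k :=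
  fun ip => (ip.1 - 1, Function.update ip.2 (ip.1 - 1) (ip.2 (ip.1 - 1) + q))

/-- Right action of a b-generator with parameter `q`. -/
def bMap (n k : ℕ) (q : ZMod (n / 2)) : DNode n k → DNode n k :=
  fun ip => (ip.1, Function.update ip.2 ip.1 (ip.2 ip.1 + q))

/-- Right action of a c-generator with parameter `q`. -/
def cMap (n k : ℕ) (q : ZMod (n / 2)) : DNode n k → DNode n k :=
  fun ip => (ip.1 + 1, Function.update ip.2 ip.1 (ip.2 ip.1 + q))

/-- Right action of a d-generator with parameter `q`. -/
def dMap (n k : ℕ) (q : ZMod (n / 2)) : DNode n k → DNode n k :=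
  fun ip => (ip.1, Function.update ip.2 (ip.1 - 1) (ip.2 (ip.1 - 1) + q))

/-- The generators of G_k^n, realised as permutations of the pairs `(i, p)`. -/
def genSet (n k : ℕ) : Set (Equiv.Perm (DNode n k)) :=
  {g | ∃ q : ZMod (n / 2),
    ⇑g = aMap n k q ∨ ⇑g = bMap n k q ∨ ⇑g = cMap n k q ∨ ⇑g = dMap n k q}

namespace DPillarAux

variable (n k : ℕ)

/-- Right multiplication in the pillar group. -/
def rMul (g : DNode n k) : Equiv.Perm (DNode n k) where
  toFun x := (x.1 + g.1, fun y => x.2 y + g.2 (y - x.1))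
  invFun x := (x.1 - g.1, fun y => x.2 y - g.2 (y - (x.1 - g.1)))
  left_inv x := by
    refine Prod.ext (by simp) ?_
    funext y; simp
  right_inv x := by
    refine Prod.ext (by simp) ?_
    funext y; simp

def gmul (a b : DNode n k) : DNode n k := (a.1 + b.1, fun y => a.2 y + b.2 (y - a.1))

lemma rMul_mul (g h : DNode n k) : rMul n k g * rMul n k h = rMul n k (gmul n k h g) := by
  refine Equiv.ext fun x => ?_
  refine Prod.ext (by simp [rMul, gmul, add_assoc]) ?_
  funext y
  show (x.2 y + h.2 (y - x.1)) + g.2 (y - (x.1 + h.1)) = x.2 y + (h.2 (y - x.1) + g.2 ((y - x.1) - h.1))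
  rw [add_assoc, sub_sub]

lemma rMul_zero : rMul n k 0 = 1 := by
  refine Equiv.ext fun x => ?_
  refine Prod.ext (by simp [rMul]) ?_
  funext y; simp [rMul]

def T : Subgroup (Equiv.Perm (DNode n k)) where
  carrier := Set.range (rMul n k)
  one_mem' := ⟨0, rMul_zero n k⟩
  mul_mem' := by
    rintro _ _ ⟨g, rfl⟩ ⟨h, rfl⟩
    exact ⟨gmul n k h g, (rMul_mul n k g h).symm⟩
  inv_mem' := by
    rintro _ ⟨g, rfl⟩
    refine ⟨(-g.1, fun y => -g.2 (y + g.1)), ?_⟩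
    symm
    refine inv_eq_of_mul_eq_one_right ?_
    rw [rMul_mul]
    have : gmul n k (-g.1, fun y => -g.2 (y + g.1)) g = 0 := by
      refine Prod.ext (by simp [gmul]) ?_
      funext y
      simp [gmul, sub_neg_eq_add]
    rw [this, rMul_zero]

def dlt (j : ZMod k) (q : ZMod (n / 2)) : ZMod k → ZMod (n / 2) :=
  fun z => if z = j then q else 0

lemma update_eq (x : DNode n k) (j : ZMod k) (q : ZMod (n / 2)) :
    Function.update x.2 (x.1 + j) (x.2 (x.1 + j) + q) =
      fun y => x.2 y + dlt n k j q (y - x.1) := by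
  funext y
  by_cases h : y = x.1 + j
  · subst h
    rw [Function.update_self, dlt, if_pos (by ring)]
  · rw [Function.update_of_ne h, dlt, if_neg, add_zero]
    intro hc
    exact h (by linear_combination hc)

lemma aMap_eq (q : ZMod (n / 2)) : aMap n k q = ⇑(rMul n k (-1, dlt n k (-1) q)) := by
  funext x
  refine Prod.ext (by show x.1 - 1 = x.1 + (-1); ring) ?_
  show Function.update x.2 (x.1 - 1) (x.2 (x.1 - 1) + q) = _
  rw [show x.1 - 1 = x.1 + (-1) by ring, update_eq]
  rfl

lemma bMap_eq (q : ZMod (n / 2)) : bMap n k q = ⇑(rMul n k (0, dlt n k 0 q)) := by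
  funext x
  refine Prod.ext (by show x.1 = x.1 + 0; ring) ?_
  show Function.update x.2 x.1 (x.2 x.1 + q) = _
  rw [show x.1 = x.1 + 0 by ring, update_eq]
  rfl

lemma cMap_eq (q : ZMod (n / 2)) : cMap n k q = ⇑(rMul n k (1, dlt n k 0 q)) := by
  funext x
  refine Prod.ext rfl ?_
  show Function.update x.2 x.1 (x.2 x.1 + q) = _
  rw [show x.1 = x.1 + 0 by ring, update_eq]
  rfl

lemma dMap_eq (q : ZMod (n / 2)) : dMap n k q = ⇑(rMul n k (0, dlt n k (-1) q)) := by
  funext x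
  refine Prod.ext (by show x.1 = x.1 + 0; ring) ?_
  show Function.update x.2 (x.1 - 1) (x.2 (x.1 - 1) + q) = _
  rw [show x.1 - 1 = x.1 + (-1) by ring, update_eq]
  rfl

lemma genSet_subset_T : genSet n k ⊆ ↑(T n k) := by
  rintro g ⟨q, (h | h | h | h)⟩
  · exact ⟨_, (Equiv.coe_fn_injective (h.trans (aMap_eq n k q))).symm⟩
  · exact ⟨_, (Equiv.coe_fn_injective (h.trans (bMap_eq n k q))).symm⟩
  · exact ⟨_, (Equiv.coe_fn_injective (h.trans (cMap_eq n k q))).symm⟩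
  · exact ⟨_, (Equiv.coe_fn_injective (h.trans (dMap_eq n k q))).symm⟩

lemma closure_le_T : Subgroup.closure (genSet n k) ≤ T n k :=
  (Subgroup.closure_le _).mpr (genSet_subset_T n k)

lemma dlt_zero (j : ZMod k) : dlt n k j 0 = 0 := by
  funext z; simp [dlt]

lemma b_mem (q : ZMod (n / 2)) : rMul n k (0, dlt n k 0 q) ∈ Subgroup.closure (genSet n k) := by
  refine Subgroup.subset_closure ⟨q, Or.inr (Or.inl ?_)⟩
  exact (bMap_eq n k q).symm ▸ rfl

lemma c_mem (q : ZMod (n / 2)) : rMul n k (1, dlt n k 0 q) ∈ Subgroup.closure (genSet n k) := by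
  refine Subgroup.subset_closure ⟨q, Or.inr (Or.inr (Or.inl ?_))⟩
  exact (cMap_eq n k q).symm ▸ rfl

lemma a_mem (q : ZMod (n / 2)) : rMul n k (-1, dlt n k (-1) q) ∈ Subgroup.closure (genSet n k) := by
  refine Subgroup.subset_closure ⟨q, Or.inl ?_⟩
  exact (aMap_eq n k q).symm ▸ rfl

lemma one_shift_mem : rMul n k (1, 0) ∈ Subgroup.closure (genSet n k) := by
  have := c_mem n k 0
  rwa [dlt_zero] at this

lemma neg_one_shift_mem : rMul n k (-1, 0) ∈ Subgroup.closure (genSet n k) := by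
  have := a_mem n k 0
  rwa [dlt_zero] at this

lemma nat_shift_mem (j : ℕ) : rMul n k ((j : ZMod k), 0) ∈ Subgroup.closure (genSet n k) := by
  induction j with
  | zero => simpa [Prod.mk_zero_zero, rMul_zero] using one_mem (Subgroup.closure (genSet n k))
  | succ j ih =>
    have h1 : gmul n k ((1 : ZMod k), 0) ((j : ZMod k), 0) = (((j + 1 : ℕ) : ZMod k), 0) := by
      refine Prod.ext ?_ ?_
      · show (1 : ZMod k) + j = ((j + 1 : ℕ) : ZMod k)
        push_cast; ring
      · funext y; show (0 : ZMod (n/2)) + 0 = 0; simp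
    have := mul_mem ih (one_shift_mem n k)
    rwa [rMul_mul, h1] at this

lemma shift_mem [NeZero k] (m : ZMod k) : rMul n k (m, 0) ∈ Subgroup.closure (genSet n k) := by
  have := nat_shift_mem n k m.val
  rwa [ZMod.natCast_rightInverse m] at this

lemma dlt_mem [NeZero k] (j : ZMod k) (q : ZMod (n / 2)) :
    rMul n k (0, dlt n k j q) ∈ Subgroup.closure (genSet n k) := by
  have h1 : gmul n k ((j : ZMod k), 0) (0, dlt n k 0 q) = (j, dlt n k j q) := by
    refine Prod.ext (by show j + 0 = j; ring) ?_
    funext y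
    show (0 : ZMod (n/2)) + dlt n k 0 q (y - j) = dlt n k j q y
    rw [zero_add, dlt, dlt]
    by_cases h : y = j
    · rw [if_pos (by rw [h]; ring), if_pos h]
    · rw [if_neg, if_neg h]
      intro hc; exact h (by linear_combination hc)
  have h2 : gmul n k (j, dlt n k j q) (-j, 0) = (0, dlt n k j q) := by
    refine Prod.ext (by show j + -j = 0; ring) ?_
    funext y; show dlt n k j q y + 0 = dlt n k j q y; ring
  have m1 := mul_mem (c_mem n k q) (shift_mem n k j)
  have s1 := mul_mem (b_mem n k q) (shift_mem n k j)
  rw [rMul_mul, h1] at s1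
  have s2 := mul_mem (shift_mem n k (-j)) s1
  rwa [rMul_mul, h2] at s2

lemma fun_mem [NeZero k] (p : ZMod k → ZMod (n / 2)) :
    rMul n k (0, p) ∈ Subgroup.closure (genSet n k) := by
  classical
  have key : ∀ s : Finset (ZMod k),
      rMul n k (0, fun y => if y ∈ s then p y else 0) ∈ Subgroup.closure (genSet n k) := by
    intro s
    induction s using Finset.induction with
    | empty =>
      have : rMul n k (0, fun y => if y ∈ (∅ : Finset (ZMod k)) then p y else 0) = 1 := by
        have h0 : ((0 : ZMod k), fun y => if y ∈ (∅ : Finset (ZMod k)) then p y else 0)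
            = (0 : DNode n k) := by
          refine Prod.ext rfl ?_
          funext y; simp
        rw [h0, rMul_zero]
      rw [this]; exact one_mem _
    | @insert j s hj ih =>
      have h1 : gmul n k (0, fun y => if y ∈ s then p y else 0) (0, dlt n k j (p j))
          = (0, fun y => if y ∈ insert j s then p y else 0) := by
        refine Prod.ext (by show (0 : ZMod k) + 0 = 0; ring) ?_
        funext y
        show (if y ∈ s then p y else 0) + dlt n k j (p j) (y - 0) = _
        rw [sub_zero, dlt]
        by_cases hy : y = j
        · subst hy
          simp [hj]
        · simp [hy, Finset.mem_insert]
      have := mul_mem (dlt_mem n k j (p j)) ih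
      rwa [rMul_mul, h1] at this
  have := key Finset.univ
  simpa using this

lemma rMul_mem [NeZero k] (g : DNode n k) : rMul n k g ∈ Subgroup.closure (genSet n k) := by
  have h1 : gmul n k (0, g.2) (g.1, 0) = g := by
    refine Prod.ext (by show (0 : ZMod k) + g.1 = g.1; ring) ?_
    funext y; show g.2 y + 0 = g.2 y; ring
  have := mul_mem (shift_mem n k g.1) (fun_mem n k g.2)
  rwa [rMul_mul, h1] at this


lemma ac (q : ZMod (n / 2)) (x : DNode n k) : aMap n k q (cMap n k (-q) x) = x := by
  refine Prod.ext (by show x.1 + 1 - 1 = x.1; ring) ?_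
  show Function.update _ (x.1 + 1 - 1) _ = x.2
  rw [show x.1 + 1 - 1 = x.1 by ring]
  simp [cMap, Function.update_idem]

lemma ca (q : ZMod (n / 2)) (x : DNode n k) : cMap n k q (aMap n k (-q) x) = x := by
  refine Prod.ext (by show x.1 - 1 + 1 = x.1; ring) ?_
  show Function.update _ (x.1 - 1) _ = x.2
  simp [aMap, Function.update_idem]

lemma bb (q : ZMod (n / 2)) (x : DNode n k) : bMap n k q (bMap n k (-q) x) = x := by
  refine Prod.ext rfl ?_
  show Function.update _ x.1 _ = x.2
  simp [bMap, Function.update_idem]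

lemma dd (q : ZMod (n / 2)) (x : DNode n k) : dMap n k q (dMap n k (-q) x) = x := by
  refine Prod.ext rfl ?_
  show Function.update _ (x.1 - 1) _ = x.2
  simp [dMap, Function.update_idem]

end DPillarAux

/-- the right-multiplications by the a-, b-, c-, d-generators generate a
group of order k·(n/2)^k acting simply transitively on the k·(n/2)^k pairs, and every
generator has an inverse among the generators. -/
theorem dpillar_group (n k : ℕ) (hn : Even n) (hn2 : 2 ≤ n) (hk : 2 ≤ k) :
    (∀ g ∈ genSet n k, g⁻¹ ∈ genSet n k) ∧
    (∀ u w : DNode n k,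
      ∃! g : Subgroup.closure (genSet n k), (g : Equiv.Perm (DNode n k)) u = w) ∧
    Nat.card (Subgroup.closure (genSet n k)) = k * (n / 2) ^ k := by
  classical
  haveI : NeZero k := ⟨by omega⟩
  haveI : NeZero (n / 2) := ⟨by omega⟩
  open DPillarAux in
  refine ⟨?_, ?_, ?_⟩
  · rintro g ⟨q, (h | h | h | h)⟩
    · refine ⟨-q, Or.inr (Or.inr (Or.inl ?_))⟩
      refine funext fun x => g.injective ?_
      rw [Equiv.Perm.coe_inv, Equiv.apply_symm_apply, h]
      exact (DPillarAux.ac n k q x).symm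
    · refine ⟨-q, Or.inr (Or.inl ?_)⟩
      refine funext fun x => g.injective ?_
      rw [Equiv.Perm.coe_inv, Equiv.apply_symm_apply, h]
      exact (DPillarAux.bb n k q x).symm
    · refine ⟨-q, Or.inl ?_⟩
      refine funext fun x => g.injective ?_
      rw [Equiv.Perm.coe_inv, Equiv.apply_symm_apply, h]
      exact (DPillarAux.ca n k q x).symm
    · refine ⟨-q, Or.inr (Or.inr (Or.inr ?_))⟩
      refine funext fun x => g.injective ?_
      rw [Equiv.Perm.coe_inv, Equiv.apply_symm_apply, h]
      exact (DPillarAux.dd n k q x).symm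
  · intro u w
    set gelt : DNode n k := (w.1 - u.1, fun y => w.2 (y + u.1) - u.2 (y + u.1)) with hgelt
    have happ : DPillarAux.rMul n k gelt u = w := by
      refine Prod.ext ?_ ?_
      · show u.1 + (w.1 - u.1) = w.1; ring
      · funext y
        show u.2 y + (w.2 ((y - u.1) + u.1) - u.2 ((y - u.1) + u.1)) = w.2 y
        rw [sub_add_cancel]; ring
    refine ⟨⟨DPillarAux.rMul n k gelt, DPillarAux.rMul_mem n k gelt⟩, happ, ?_⟩
    rintro ⟨e, he⟩ (hval : e u = w)
    obtain ⟨g', hg'⟩ := DPillarAux.closure_le_T n k he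
    have hequ : DPillarAux.rMul n k g' u = DPillarAux.rMul n k gelt u := by
      rw [hg', hval, happ]
    have h1 : g'.1 = gelt.1 := by
      have := congrArg Prod.fst hequ
      exact add_left_cancel this
    have h2 : g'.2 = gelt.2 := by
      funext z
      have := congrArg (fun v : DNode n k => v.2 (z + u.1)) hequ
      simp only [DPillarAux.rMul, Equiv.coe_fn_mk, add_sub_cancel_right] at this
      exact add_left_cancel this
    have : g' = gelt := Prod.ext h1 h2
    refine Subtype.ext ?_
    show e = DPillarAux.rMul n k gelt
    rw [← hg', this]
  · have hbij : Function.Bijective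
        (fun e : Subgroup.closure (genSet n k) =>
          (e : Equiv.Perm (DNode n k)) ((0 : ZMod k), (0 : ZMod k → ZMod (n / 2)))) := by
      constructor
      · rintro ⟨e, he⟩ ⟨e', he'⟩ hval
        obtain ⟨g, hg⟩ := DPillarAux.closure_le_T n k he
        obtain ⟨g', hg'⟩ := DPillarAux.closure_le_T n k he'
        simp only [← hg, ← hg'] at hval
        have hev : ∀ h : DNode n k,
            DPillarAux.rMul n k h ((0 : ZMod k), (0 : ZMod k → ZMod (n / 2))) = h := by
          intro h
          refine Prod.ext (by show (0 : ZMod k) + h.1 = h.1; ring) ?_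
          funext y
          show (0 : ZMod (n / 2)) + h.2 (y - 0) = h.2 y
          rw [sub_zero, zero_add]
        rw [hev, hev] at hval
        exact Subtype.ext (show e = e' by rw [← hg, ← hg', hval])
      · intro x
        refine ⟨⟨DPillarAux.rMul n k x, DPillarAux.rMul_mem n k x⟩, ?_⟩
        refine Prod.ext (by show (0 : ZMod k) + x.1 = x.1; ring) ?_
        funext y
        show (0 : ZMod (n / 2)) + x.2 (y - 0) = x.2 y
        rw [sub_zero, zero_add]
    rw [Nat.card_eq_of_bijective _ hbij]
    rw [Nat.card_prod, Nat.card_zmod]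
    congr 1
    rw [Nat.card_eq_fintype_card, Fintype.card_fun, ZMod.card, ZMod.card]
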